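/- Let k be a field of characteristic p > 0 and let H be a finite subgroup of PGL₂(k) whose order is a power of p. Then H is elementary abelian: H is commutative and every nontrivial element of H has order p. -/

import Mathlib

open Matrix

section Aux

variable {K : Type*} [Field K]

/-- Cayley–Hamilton for 2×2 matrices. -/
lemma ch2 (X : Matrix (Fin 2) (Fin 2) K) :
    X * X = (trace X) • X - (det X) • (1 : Matrix (Fin 2) (Fin 2) K) := by
  ext i j
  fin_cases i <;> fin_cases j <;>
    simp [Matrix.mul_apply, Fin.sum_univ_two, Matrix.trace_fin_two, Matrix.det_fin_two,
      Matrix.one_apply] <;> ring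

/-- A nilpotent 2×2 matrix has zero trace, determinant, and square. -/
lemma nilp2 {X : Matrix (Fin 2) (Fin 2) K} {m : ℕ} (hm : m ≠ 0) (hX : X ^ m = 0) :
    trace X = 0 ∧ det X = 0 ∧ X * X = 0 := by
  have hdet : det X = 0 := by
    have h1 : det X ^ m = 0 := by rw [← det_pow, hX]; simp
    exact pow_eq_zero_iff hm |>.mp h1
  have hch : X * X = trace X • X := by rw [ch2, hdet]; simp
  have key : ∀ n : ℕ, X ^ (n + 1) = trace X ^ n • X := by
    intro n
    induction n with
    | zero => simp
    | succ n ih =>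
        rw [pow_succ, ih, smul_mul_assoc, hch, smul_smul, pow_succ]
  obtain ⟨m', rfl⟩ := Nat.exists_eq_succ_of_ne_zero hm
  have h0 : trace X ^ m' • X = 0 := by rw [← key, hX]
  rcases smul_eq_zero.mp h0 with h | h
  · have ht : trace X = 0 := by
      rcases eq_or_ne m' 0 with rfl | hm' 
      · simpa using h
      · exact pow_eq_zero_iff hm' |>.mp h
    exact ⟨ht, hdet, by rw [hch, ht, zero_smul]⟩
  · subst h
    simp

end Aux

open Matrix

section Aux2

variable {F : Type*} [Field F] [IsAlgClosed F] (p : ℕ) [Fact p.Prime] [CharP F p]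

lemma scalar_pow_structure (A : Matrix (Fin 2) (Fin 2) F) (s : ℕ) (c : F)
    (h : A ^ p ^ s = c • (1 : Matrix (Fin 2) (Fin 2) F)) :
    trace A ^ 2 = 4 * det A ∧ ∃ μ : F, A ^ p = μ • (1 : Matrix (Fin 2) (Fin 2) F) := by
  have hp2 : 2 ≤ p := (Fact.out : p.Prime).two_le
  obtain ⟨l, hl⟩ := IsAlgClosed.exists_pow_nat_eq c (n := p ^ s) (pow_pos (by omega) s)
  set X : Matrix (Fin 2) (Fin 2) F := A - l • 1 with hXdef
  have hcomm : Commute A (l • (1 : Matrix (Fin 2) (Fin 2) F)) :=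
    (Commute.one_right A).smul_right l
  have hXpow : X ^ p ^ s = 0 := by
    rw [hXdef, sub_pow_char_pow_of_commute _ _ hcomm, h, smul_pow, one_pow, hl, sub_self]
  obtain ⟨htr, hdet, hsq⟩ := nilp2 (pow_ne_zero s (by omega : p ≠ 0)) hXpow
  have htrA : trace A = 2 * l := by
    have : trace X = trace A - l * 2 := by
      rw [hXdef]; simp [Matrix.trace_sub, Matrix.trace_smul, Matrix.trace_one]
    rw [this] at htr; linear_combination htr
  have hdetX : (A 0 0 - l) * (A 1 1 - l) - A 0 1 * A 1 0 = 0 := by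
    have : det X = (A 0 0 - l) * (A 1 1 - l) - A 0 1 * A 1 0 := by
      rw [hXdef, Matrix.det_fin_two]
      simp [Matrix.one_apply]
    rw [← this, hdet]
  have htrA' : A 0 0 + A 1 1 = 2 * l := by
    rw [← Matrix.trace_fin_two A]; exact htrA
  constructor
  · rw [Matrix.trace_fin_two, Matrix.det_fin_two]
    linear_combination (A 0 0 + A 1 1 - 2 * l) * htrA' - 4 * hdetX
  · refine ⟨l ^ p, ?_⟩
    have hA : A = l • 1 + X := by rw [hXdef]; abel
    have hXp : X ^ p = 0 := by
      have : X ^ p = X * X * X ^ (p - 2) := by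
        rw [← pow_two, ← pow_add]
        congr 1
        omega
      rw [this, hsq, zero_mul]
    rw [hA, add_pow_char_of_commute _ ((Commute.one_left X).smul_left l), hXp, add_zero,
      smul_pow, one_pow]

end Aux2
section Bridge

variable {k : Type*} [Field k] (p : ℕ) [Fact p.Prime] [CharP k p]

lemma bridge (A : Matrix (Fin 2) (Fin 2) k) (s : ℕ) (c : k)
    (h : A ^ p ^ s = c • (1 : Matrix (Fin 2) (Fin 2) k)) :
    trace A ^ 2 = 4 * det A ∧ ∃ μ : k, A ^ p = μ • (1 : Matrix (Fin 2) (Fin 2) k) := by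
  set F := AlgebraicClosure k
  set φ : k →+* F := algebraMap k F with hφdef
  have hφ : Function.Injective φ := φ.injective
  have hmapsmul : ∀ c : k, (φ.mapMatrix (c • (1 : Matrix (Fin 2) (Fin 2) k)))
      = φ c • (1 : Matrix (Fin 2) (Fin 2) F) := by
    intro c
    ext i j
    by_cases hij : i = j <;>
      simp [RingHom.mapMatrix_apply, Matrix.map_apply, Matrix.one_apply, hij]
  have hΦ : Function.Injective (φ.mapMatrix : Matrix (Fin 2) (Fin 2) k →+* _) :=
    Matrix.map_injective hφ
  have hpow : (A.map φ) ^ p ^ s = φ c • (1 : Matrix (Fin 2) (Fin 2) F) := by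
    have h' := congrArg (φ.mapMatrix : Matrix (Fin 2) (Fin 2) k →+* _) h
    rw [map_pow, hmapsmul] at h'
    simpa [RingHom.mapMatrix_apply] using h'
  obtain ⟨h1, μF, h2⟩ := scalar_pow_structure p (A.map φ) s (φ c) hpow
  have hmp : (φ.mapMatrix (A ^ p) : Matrix (Fin 2) (Fin 2) F) = μF • 1 := by
    rw [map_pow]
    simpa [RingHom.mapMatrix_apply] using h2
  constructor
  · apply hφ
    rw [_root_.map_mul, _root_.map_pow, φ.map_det]
    have htr : φ (Matrix.trace A) = Matrix.trace (A.map φ) := by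
      simp [Matrix.trace_fin_two, Matrix.map_apply]
    rw [htr]
    simpa [RingHom.mapMatrix_apply, map_ofNat] using h1
  · refine ⟨(A ^ p) 0 0, hΦ ?_⟩
    rw [hmp, hmapsmul]
    have hent : φ ((A ^ p) 0 0) = (φ.mapMatrix (A ^ p) : Matrix (Fin 2) (Fin 2) F) 0 0 := rfl
    rw [hent, hmp]
    simp

end Bridge
section Center

variable {k : Type*} [Field k]

lemma center_is_scalar {Z : GL (Fin 2) k} (hZ : Z ∈ Subgroup.center (GL (Fin 2) k)) :
    ∃ c : k, (Z : Matrix (Fin 2) (Fin 2) k) = c • (1 : Matrix (Fin 2) (Fin 2) k) := by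
  have hcomm : ∀ i j : Fin 2, i ≠ j →
      Commute (Matrix.single i j (1 : k)) (Z : Matrix (Fin 2) (Fin 2) k) := by
    intro i j hij
    set E := Matrix.single i j (1 : k) with hE
    have hE2 : E * E = 0 := by
      rw [hE, Matrix.single_mul_single_of_ne]
      exact hij.symm
    have hinv : (1 + E) * (1 - E) = 1 := by
      rw [mul_sub, add_mul, add_mul]
      simp [hE2]
    have hinv' : (1 - E) * (1 + E) = 1 := by
      rw [sub_mul, mul_add, mul_add]
      simp [hE2]
    let u : GL (Fin 2) k := ⟨1 + E, 1 - E, hinv, hinv'⟩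
    have := Subgroup.mem_center_iff.mp hZ u
    have hval : ((1 : Matrix (Fin 2) (Fin 2) k) + E) * (Z : Matrix (Fin 2) (Fin 2) k)
        = (Z : Matrix (Fin 2) (Fin 2) k) * (1 + E) := by
      have := congrArg Units.val this
      simpa using this
    have : E * (Z : Matrix (Fin 2) (Fin 2) k) = (Z : Matrix (Fin 2) (Fin 2) k) * E := by
      rw [add_mul, mul_add, one_mul, mul_one] at hval
      exact add_left_cancel hval
    exact this
  obtain ⟨c, hc⟩ := Matrix.mem_range_scalar_of_commute_single
    (fun i j hij => hcomm i j hij)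
  refine ⟨c, ?_⟩
  rw [← hc]
  ext i j
  by_cases hij : i = j <;> simp [Matrix.scalar_apply, Matrix.one_apply, hij,
    Matrix.diagonal_apply]

lemma scalar_mem_center {c : k} (Z : GL (Fin 2) k)
    (hc : (Z : Matrix (Fin 2) (Fin 2) k) = c • (1 : Matrix (Fin 2) (Fin 2) k)) :
    Z ∈ Subgroup.center (GL (Fin 2) k) := by
  rw [Subgroup.mem_center_iff]
  intro g
  refine Units.ext ?_
  rw [Units.val_mul, Units.val_mul, hc, Matrix.smul_mul, Matrix.mul_smul, one_mul, mul_one]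

end Center
section Comm2

variable {K : Type*} [Field K]

lemma comm2 (A B : Matrix (Fin 2) (Fin 2) K)
    (hdA : Matrix.det A ≠ 0) (hdB : Matrix.det B ≠ 0)
    (hA : Matrix.trace A ^ 2 = 4 * Matrix.det A)
    (hB : Matrix.trace B ^ 2 = 4 * Matrix.det B)
    (hAB : Matrix.trace (A * B) ^ 2 = 4 * (Matrix.det A * Matrix.det B))
    (hAB' : (Matrix.trace A * Matrix.trace B - Matrix.trace (A * B)) ^ 2
      = 4 * (Matrix.det A * Matrix.det B)) :
    A * B = B * A := by
  set a := A 0 0; set b := A 0 1; set c := A 1 0; set d := A 1 1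
  set e := B 0 0; set f := B 0 1; set g := B 1 0; set h := B 1 1
  have htA : Matrix.trace A = a + d := Matrix.trace_fin_two A
  have htB : Matrix.trace B = e + h := Matrix.trace_fin_two B
  have hdetA : Matrix.det A = a * d - b * c := Matrix.det_fin_two A
  have hdetB : Matrix.det B = e * h - f * g := Matrix.det_fin_two B
  have htAB : Matrix.trace (A * B) = a * e + b * g + c * f + d * h := by
    simp [Matrix.trace_fin_two, Matrix.mul_apply, Fin.sum_univ_two]
    ring
  rw [htA, hdetA] at hA
  rw [htB, hdetB] at hB
  rw [htAB, hdetA, hdetB] at hAB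
  rw [htA, htB, htAB, hdetA, hdetB] at hAB'
  -- the three entrywise identities we need
  have main : b * g = c * f ∧ a * f + b * h = e * b + f * d ∧ c * e + d * g = g * a + h * c := by
    by_cases hc0 : (a + d) * (e + h) = 0
    · -- degenerate case: forces characteristic 2 behaviour
      have h4 : (4 : K) = 0 := by
        rcases mul_eq_zero.mp hc0 with h0 | h0
        · have : 4 * (a * d - b * c) = 0 := by rw [← hA, h0]; ring
          rcases mul_eq_zero.mp this with h' | h'
          · exact h'
          · exact absurd (hdetA.trans h') hdA
        · have : 4 * (e * h - f * g) = 0 := by rw [← hB, h0]; ring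
          rcases mul_eq_zero.mp this with h' | h'
          · exact h'
          · exact absurd (hdetB.trans h') hdB
      have h2 : (2 : K) = 0 := by
        have : (2 : K) ^ 2 = 0 := by rw [show ((2:K)^2 = 4) by norm_num, h4]
        exact pow_eq_zero_iff (by norm_num : (2:ℕ) ≠ 0) |>.mp this
      have ht : a + d = 0 := by
        have : (a + d) ^ 2 = 0 := by rw [hA, h4]; ring
        exact pow_eq_zero_iff (by norm_num : (2:ℕ) ≠ 0) |>.mp this
      have hu : e + h = 0 := by
        have : (e + h) ^ 2 = 0 := by rw [hB, h4]; ring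
        exact pow_eq_zero_iff (by norm_num : (2:ℕ) ≠ 0) |>.mp this
      have hv : a * e + b * g + c * f + d * h = 0 := by
        have : (a * e + b * g + c * f + d * h) ^ 2 = 0 := by rw [hAB, h4]; ring
        exact pow_eq_zero_iff (by norm_num : (2:ℕ) ≠ 0) |>.mp this
      refine ⟨?_, ?_, ?_⟩
      · linear_combination hv - e * ht - d * hu + (d * e - c * f) * h2
      · linear_combination f * ht + b * hu - (f * d + b * e) * h2
      · linear_combination c * hu + g * ht - (c * h + g * a) * h2
    · -- main case
      have h2 : (2 : K) ≠ 0 := by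
        intro h2
        apply hc0
        have h4 : (4 : K) = 0 := by rw [show ((4:K) = 2 * 2) by norm_num, h2]; ring
        have ht : a + d = 0 := by
          have : (a + d) ^ 2 = 0 := by rw [hA, h4]; ring
          exact pow_eq_zero_iff (by norm_num : (2:ℕ) ≠ 0) |>.mp this
        rw [ht]; ring
      have h3 : (a + d) * (e + h) - 2 * (a * e + b * g + c * f + d * h) = 0 := by
        have hfac : ((a + d) * (e + h)) *
            ((a + d) * (e + h) - 2 * (a * e + b * g + c * f + d * h)) = 0 := by
          linear_combination hAB' - hAB
        rcases mul_eq_zero.mp hfac with h' | h'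
        · exact absurd h' hc0
        · exact h'
      have sq_zero : ∀ x : K, x ^ 2 = 0 → x = 0 := fun x hx =>
        pow_eq_zero_iff (by norm_num : (2:ℕ) ≠ 0) |>.mp hx
      have two_cancel : ∀ x : K, 2 * x = 0 → x = 0 := by
        intro x hx
        rcases mul_eq_zero.mp hx with h' | h'
        · exact absurd h' h2
        · exact h'
      refine ⟨?_, ?_, ?_⟩
      · apply sub_eq_zero.mp
        apply two_cancel
        apply sq_zero
        linear_combination (e - h) ^ 2 * hA - 4 * b * c * hB
          - (2 * b * g + 2 * c * f - (a - d) * (e - h)) * h3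
      · apply sub_eq_zero.mp
        apply two_cancel
        apply sq_zero
        linear_combination 4 * f ^ 2 * hA + 4 * b ^ 2 * hB + 8 * b * f * h3
      · apply sub_eq_zero.mp
        apply two_cancel
        apply sq_zero
        linear_combination 4 * g ^ 2 * hA + 4 * c ^ 2 * hB + 8 * c * g * h3
  obtain ⟨E1, E2, E3⟩ := main
  ext i j
  fin_cases i <;> fin_cases j <;>
    simp [Matrix.mul_apply, Fin.sum_univ_two] <;>
    first
      | linear_combination E1
      | linear_combination E2
      | linear_combination E3
      | linear_combination -E1

end Comm2
section Conv

variable {K : Type*} [Field K]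

lemma adj2 (B : Matrix (Fin 2) (Fin 2) K) :
    Matrix.adjugate B = Matrix.trace B • (1 : Matrix (Fin 2) (Fin 2) K) - B := by
  rw [Matrix.adjugate_fin_two]
  ext i j
  fin_cases i <;> fin_cases j <;>
    simp [Matrix.trace_fin_two, Matrix.one_apply]

lemma conv (A B : Matrix (Fin 2) (Fin 2) K) (hdB : Matrix.det B ≠ 0)
    (h : Matrix.trace (A * B⁻¹) ^ 2 = 4 * Matrix.det (A * B⁻¹)) :
    (Matrix.trace A * Matrix.trace B - Matrix.trace (A * B)) ^ 2
      = 4 * (Matrix.det A * Matrix.det B) := by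
  have hBinv : B⁻¹ = (Matrix.det B)⁻¹ • (Matrix.trace B • (1 : Matrix (Fin 2) (Fin 2) K) - B) := by
    rw [Matrix.inv_def, Ring.inverse_eq_inv', adj2]
  have htr : Matrix.trace (A * B⁻¹)
      = (Matrix.det B)⁻¹ * (Matrix.trace A * Matrix.trace B - Matrix.trace (A * B)) := by
    rw [hBinv, Matrix.mul_smul, Matrix.trace_smul, smul_eq_mul]
    congr 1
    rw [mul_sub, Matrix.trace_sub, Matrix.mul_smul, Matrix.trace_smul, mul_one, smul_eq_mul]
    ring
  have hdet : Matrix.det (A * B⁻¹) = Matrix.det A * (Matrix.det B)⁻¹ := by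
    rw [Matrix.det_mul, Matrix.det_nonsing_inv, Ring.inverse_eq_inv']
  rw [htr, hdet] at h
  field_simp at h
  apply mul_right_cancel₀ hdB
  linear_combination B.det * h

end Conv
/-- `PGL₂(k)`: the quotient of `GL₂(k)` by its center (the nonzero scalar matrices). -/
abbrev PGL2 (k : Type) [Field k] : Type :=
  GL (Fin 2) k ⧸ Subgroup.center (GL (Fin 2) k)

section Lift

variable {k : Type} [Field k] (p : ℕ) [Fact p.Prime] [CharP k p]

lemma lift_cond (s : ℕ) (A : GL (Fin 2) k)
    (hA : (QuotientGroup.mk A : PGL2 k) ^ p ^ s = 1) :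
    (Matrix.trace (A : Matrix (Fin 2) (Fin 2) k) ^ 2
        = 4 * Matrix.det (A : Matrix (Fin 2) (Fin 2) k)) ∧
      (QuotientGroup.mk A : PGL2 k) ^ p = 1 := by
  have h1 : A ^ p ^ s ∈ Subgroup.center (GL (Fin 2) k) := by
    rw [← QuotientGroup.eq_one_iff]
    rw [← hA]
    rfl
  obtain ⟨c, hc⟩ := center_is_scalar h1
  have hc' : (A : Matrix (Fin 2) (Fin 2) k) ^ p ^ s = c • 1 := by
    rw [← Units.val_pow_eq_pow_val, hc]
  obtain ⟨hcond, μ, hμ⟩ := bridge p _ s c hc'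
  refine ⟨hcond, ?_⟩
  have : ((A ^ p : GL (Fin 2) k) : PGL2 k) = 1 := by
    rw [QuotientGroup.eq_one_iff]
    exact scalar_mem_center (A ^ p) (by rw [Units.val_pow_eq_pow_val]; exact hμ)
  rw [← this]
  rfl

end Lift

/-- In characteristic `p > 0`, every finite subgroup of `PGL₂(k)` of `p`-power order is
elementary abelian: it is commutative and all its nontrivial elements have order `p`. -/
theorem p_subgroup_PGL2_elementary_abelian
    (k : Type) [Field k] (p : ℕ) [Fact p.Prime] [CharP k p]
    (H : Subgroup (PGL2 k)) (hcard : ∃ s : ℕ, Nat.card H = p ^ s) :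
    (∀ a b : H, a * b = b * a) ∧ (∀ h : H, h ≠ 1 → orderOf h = p) := by
  obtain ⟨s, hs⟩ := hcard
  have hpow : ∀ x : PGL2 k, x ∈ H → x ^ p ^ s = 1 := by
    intro x hx
    have h1 : (⟨x, hx⟩ : H) ^ Nat.card H = 1 := pow_card_eq_one'
    rw [hs] at h1
    have h2 := congrArg (Subgroup.subtype H) h1
    simpa using h2
  constructor
  · -- commutativity
    intro a b
    obtain ⟨A, hA⟩ := QuotientGroup.mk_surjective (a : PGL2 k)
    obtain ⟨B, hB⟩ := QuotientGroup.mk_surjective (b : PGL2 k)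
    have hABmem : ((a : PGL2 k) * (b : PGL2 k)) ∈ H := mul_mem a.2 b.2
    have hABmem' : ((a : PGL2 k) * (b : PGL2 k)⁻¹) ∈ H := mul_mem a.2 (inv_mem b.2)
    have c1 := (lift_cond p s A (by rw [hA]; exact hpow _ a.2)).1
    have c2 := (lift_cond p s B (by rw [hB]; exact hpow _ b.2)).1
    have c3 := (lift_cond p s (A * B) (by
      have : (QuotientGroup.mk (A * B) : PGL2 k) = (a : PGL2 k) * (b : PGL2 k) := by
        rw [← hA, ← hB]; rfl
      rw [this]; exact hpow _ hABmem)).1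
    have c4 := (lift_cond p s (A * B⁻¹) (by
      have : (QuotientGroup.mk (A * B⁻¹) : PGL2 k) = (a : PGL2 k) * (b : PGL2 k)⁻¹ := by
        rw [← hA, ← hB]; rfl
      rw [this]; exact hpow _ hABmem')).1
    have hdA : Matrix.det (A : Matrix (Fin 2) (Fin 2) k) ≠ 0 :=
      ((Matrix.isUnit_iff_isUnit_det _).mp A.isUnit).ne_zero
    have hdB : Matrix.det (B : Matrix (Fin 2) (Fin 2) k) ≠ 0 :=
      ((Matrix.isUnit_iff_isUnit_det _).mp B.isUnit).ne_zero
    -- rewrite c3, c4 into matrix form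
    have hvalAB : ((A * B : GL (Fin 2) k) : Matrix (Fin 2) (Fin 2) k)
        = (A : Matrix (Fin 2) (Fin 2) k) * (B : Matrix (Fin 2) (Fin 2) k) := rfl
    have hvalAB' : ((A * B⁻¹ : GL (Fin 2) k) : Matrix (Fin 2) (Fin 2) k)
        = (A : Matrix (Fin 2) (Fin 2) k) * (B : Matrix (Fin 2) (Fin 2) k)⁻¹ := by
      rw [Units.val_mul, Matrix.coe_units_inv]
    rw [hvalAB] at c3
    rw [hvalAB'] at c4
    have c3' : Matrix.trace ((A : Matrix (Fin 2) (Fin 2) k) * (B : Matrix (Fin 2) (Fin 2) k)) ^ 2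
        = 4 * (Matrix.det (A : Matrix (Fin 2) (Fin 2) k)
          * Matrix.det (B : Matrix (Fin 2) (Fin 2) k)) := by
      rw [c3, Matrix.det_mul]
    have c4' := conv (A : Matrix (Fin 2) (Fin 2) k) (B : Matrix (Fin 2) (Fin 2) k) hdB c4
    have hcomm := comm2 (A : Matrix (Fin 2) (Fin 2) k) (B : Matrix (Fin 2) (Fin 2) k)
      hdA hdB c1 c2 c3' c4'
    have hGL : A * B = B * A := Units.ext hcomm
    have : (a : PGL2 k) * (b : PGL2 k) = (b : PGL2 k) * (a : PGL2 k) := by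
      rw [← hA, ← hB]
      calc (QuotientGroup.mk A : PGL2 k) * QuotientGroup.mk B
          = QuotientGroup.mk (A * B) := rfl
        _ = QuotientGroup.mk (B * A) := by rw [hGL]
        _ = (QuotientGroup.mk B : PGL2 k) * QuotientGroup.mk A := rfl
    exact Subtype.ext this
  · -- orders
    intro h hne
    obtain ⟨A, hA⟩ := QuotientGroup.mk_surjective (h : PGL2 k)
    have c := (lift_cond p s A (by rw [hA]; exact hpow _ h.2)).2
    rw [hA] at c
    have hp1 : h ^ p = 1 := by
      apply Subtype.ext
      simpa using c
    have hdvd : orderOf h ∣ p := orderOf_dvd_of_pow_eq_one hp1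
    rcases (Fact.out : p.Prime).eq_one_or_self_of_dvd _ hdvd with h1 | h1
    · exact absurd (orderOf_eq_one_iff.mp h1) hne
    · exact h1
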